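/- arXiv:1703.08739 — 2 statements merged into one kernel-verified Lean document; each statement's English description precedes it below -/
import Mathlib

section
/- For k ≥ 3, there is no k-geodetic digraph with minimum out-degree 2, order M(2,k)+2, and in-degree sequence (1,2,...,2,3): the counting bound |T_{-k}(v')| ≥ 2 + M(2,k-2) + 2M(2,k-1) exceeds the order M(2,k)+2. -/
/-- Moore bound `M(d,k) = 1 + d + ... + d^k`. -/
def moore (d k : ℕ) : ℕ := ∑ i ∈ Finset.range (k + 1), d ^ i

/-- Moore bound with integer argument, with the convention `M(d,k) = 0` for `k < 0`. -/
def mooreZ (d : ℕ) (j : ℤ) : ℕ := if j < 0 then 0 else moore d j.toNat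

/-- Walks of length at most `k` from `u` to `v` in the digraph with arc relation `A`,
encoded as vertex lists (so a walk of length `≤ k` is a list of length `≤ k+1`). -/
def walksUpTo {V : Type*} (A : V → V → Prop) (k : ℕ) (u v : V) : Set (List V) :=
  {l | l.Chain' A ∧ l.head? = some u ∧ l.getLast? = some v ∧ l.length ≤ k + 1}

/-- A digraph is `k`-geodetic if between any ordered pair of vertices there is at most
one directed walk of length at most `k`. -/
def IsGeodetic {V : Type*} (A : V → V → Prop) (k : ℕ) : Prop :=
  ∀ u v : V, (walksUpTo A k u v).Subsingleton

/-- `v` is reachable from `u` by a directed walk of length at most `k`. -/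
def reachIn {V : Type*} (A : V → V → Prop) (k : ℕ) (u v : V) : Prop :=
  (walksUpTo A k u v).Nonempty

/-- Out-degree of a vertex. -/
noncomputable def outDeg {V : Type*} (A : V → V → Prop) (u : V) : ℕ := {v | A u v}.ncard

/-- In-degree of a vertex. -/
noncomputable def inDeg {V : Type*} (A : V → V → Prop) (v : V) : ℕ := {u | A u v}.ncard

/-- The outlier set `O(u)`: vertices not reachable from `u` within distance `k`. -/
def outlier {V : Type*} (A : V → V → Prop) (k : ℕ) (u : V) : Set V :=
  {v | ¬ reachIn A k u v}

/-- Auxiliary: if every value of `f` on `s` is at least 1 and at most one element of `s`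
has `f`-value 1, then `2 * s.card ≤ ∑ f + 1`. -/
private lemma sum_ge_aux {α : Type*} [DecidableEq α] (s : Finset α) (f : α → ℕ)
    (h1 : ∀ a ∈ s, 1 ≤ f a) (hcard : (s.filter fun a => f a = 1).card ≤ 1) :
    2 * s.card ≤ (∑ a ∈ s, f a) + 1 := by
  have key : ∀ a ∈ s, 2 ≤ f a + (if f a = 1 then 1 else 0) := by
    intro a ha
    have := h1 a ha
    split <;> omega
  calc 2 * s.card = ∑ _a ∈ s, 2 := by rw [Finset.sum_const, smul_eq_mul, mul_comm]
    _ ≤ ∑ a ∈ s, (f a + if f a = 1 then 1 else 0) := Finset.sum_le_sum key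
    _ = (∑ a ∈ s, f a) + (s.filter fun a => f a = 1).card := by
        rw [Finset.sum_add_distrib, Finset.card_filter]
    _ ≤ (∑ a ∈ s, f a) + 1 := by omega

private lemma moore_two (k : ℕ) : moore 2 k = (∑ i ∈ Finset.range k, 2 ^ (i + 1)) + 1 := by
  rw [moore, Finset.sum_range_succ']
  simp

/-- For `k ≥ 3`, there is no `k`-geodetic digraph with minimum out-degree 2,
order `M(2,k)+2`, and in-degree sequence `(1,2,…,2,3)`. -/
theorem stmt11 {V : Type*} [Fintype V] (A : V → V → Prop) (k : ℕ) (hk : 3 ≤ k)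
    (hgeo : IsGeodetic A k) (hout : ∀ u : V, 2 ≤ outDeg A u)
    (hcard : Fintype.card V = moore 2 k + 2)
    (h1 : {v : V | inDeg A v = 1}.ncard = 1)
    (h3 : {v : V | inDeg A v = 3}.ncard = 1)
    (hall : ∀ v : V, inDeg A v = 1 ∨ inDeg A v = 2 ∨ inDeg A v = 3) :
    False := by
  classical
  -- pick the vertex `v'` of in-degree 3 and the vertex `v1` of in-degree 1
  obtain ⟨v', hv'⟩ : ∃ v', inDeg A v' = 3 := by
    obtain ⟨a, ha⟩ := Set.ncard_eq_one.mp h3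
    exact ⟨a, by have : a ∈ {v : V | inDeg A v = 3} := ha ▸ rfl; exact this⟩
  obtain ⟨v1, hv1⟩ := Set.ncard_eq_one.mp h1
  letI : Inhabited V := ⟨v'⟩
  -- the set of walks of length exactly `i` ending at `v'`
  set W : ℕ → Set (List V) :=
    fun i => {l | l.Chain' A ∧ l.getLast? = some v' ∧ l.length = i + 1} with hWdef
  have Wfin : ∀ i, (W i).Finite := fun i =>
    (List.finite_length_eq V (i + 1)).subset fun l hl => hl.2.2
  set Wf : ℕ → Finset (List V) := fun i => (Wfin i).toFinset with hWfdef
  have memWf : ∀ i (l : List V),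
      l ∈ Wf i ↔ (l.Chain' A ∧ l.getLast? = some v' ∧ l.length = i + 1) := by
    intro i l
    simp [hWfdef, Set.Finite.mem_toFinset, hWdef]
  -- lists in `Wf i` are nonempty
  have exCons : ∀ i (l : List V), l ∈ Wf i → ∃ x t, l = x :: t := by
    intro i l hl
    rcases l with _ | ⟨x, t⟩
    · rw [memWf] at hl; simp at hl
    · exact ⟨x, t, rfl⟩
  -- a walk in `Wf i` with `i ≤ k` is a walk up to `k` from its head to `v'`
  have memWalks : ∀ i, i ≤ k → ∀ l ∈ Wf i, l ∈ walksUpTo A k l.headI v' := by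
    intro i hik l hl
    obtain ⟨x, t, rfl⟩ := exCons i l hl
    rw [memWf] at hl
    refine ⟨hl.1, rfl, hl.2.1, ?_⟩
    rw [hl.2.2]; omega
  -- heads determine walks (by `k`-geodecity)
  have headInj : ∀ i, i ≤ k → ∀ j, j ≤ k → ∀ l₁ ∈ Wf i, ∀ l₂ ∈ Wf j,
      l₁.headI = l₂.headI → l₁ = l₂ := by
    intro i hik j hjk l₁ hl₁ l₂ hl₂ heq
    refine hgeo l₁.headI v' (memWalks i hik l₁ hl₁) ?_
    rw [heq]; exact memWalks j hjk l₂ hl₂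
  -- cardinality of `Wf 0`
  have c0 : (Wf 0).card = 1 := by
    have h : Wf 0 = {[v']} := by
      ext l
      rw [memWf, Finset.mem_singleton]
      constructor
      · rintro ⟨hc, hlast, hlen⟩
        rcases l with _ | ⟨x, _ | ⟨y, t⟩⟩
        · simp at hlen
        · obtain rfl : x = v' := by simpa using hlast
          rfl
        · simp only [List.length_cons] at hlen; omega
      · rintro rfl
        refine ⟨List.isChain_singleton _, rfl, rfl⟩
    rw [h]; rfl
  -- cardinality of `Wf 1`
  have c1 : (Wf 1).card = 3 := by
    have h : Wf 1 = Finset.image (fun u => [u, v']) ((Set.toFinite {u | A u v'}).toFinset) := by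
      ext l
      rw [memWf, Finset.mem_image]
      constructor
      · rintro ⟨hc, hlast, hlen⟩
        rcases l with _ | ⟨x, _ | ⟨y, _ | ⟨z, t⟩⟩⟩
        · simp at hlen
        · simp at hlen
        · obtain rfl : y = v' := by simpa using hlast
          refine ⟨x, ?_, rfl⟩
          rw [Set.Finite.mem_toFinset]
          exact (List.isChain_cons_cons.mp hc).1
        · simp only [List.length_cons] at hlen; omega
      · rintro ⟨u, hu, rfl⟩
        rw [Set.Finite.mem_toFinset] at hu
        refine ⟨List.isChain_cons_cons.mpr ⟨hu, List.isChain_singleton _⟩, rfl, rfl⟩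
    rw [h, Finset.card_image_of_injective _ (fun a b hab => by injection hab)]
    rw [← Set.ncard_eq_toFinset_card _ (Set.toFinite _)]
    exact hv'
  -- the tail of a walk in `Wf (i+1)` is a walk in `Wf i`
  have tailMem : ∀ i (l : List V), l ∈ Wf (i + 1) → l.tail ∈ Wf i := by
    intro i l hl
    obtain ⟨x, t, rfl⟩ := exCons _ l hl
    rw [memWf] at hl
    rcases t with _ | ⟨y, s⟩
    · exfalso; have := hl.2.2; simp at this
    · rw [memWf]
      refine ⟨hl.1.tail, ?_, ?_⟩
      · have := hl.2.1
        rwa [List.getLast?_cons_cons] at this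
      · have h := hl.2.2
        simp only [List.tail_cons, List.length_cons] at h ⊢
        omega
  -- fiber of the tail map over `m ∈ Wf i` has cardinality `inDeg A m.headI`
  have fiber : ∀ i, ∀ m ∈ Wf i,
      ((Wf (i + 1)).filter fun l => l.tail = m).card = inDeg A m.headI := by
    intro i m hm
    obtain ⟨u, t, rfl⟩ := exCons i m hm
    rw [memWf] at hm
    have h : ((Wf (i + 1)).filter fun l => l.tail = u :: t)
        = Finset.image (fun x => x :: u :: t) ((Set.toFinite {x | A x u}).toFinset) := by
      ext l
      rw [Finset.mem_filter, memWf, Finset.mem_image]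
      constructor
      · rintro ⟨⟨hc, hlast, hlen⟩, htail⟩
        rcases l with _ | ⟨x, rest⟩
        · simp at hlen
        · simp only [List.tail_cons] at htail
          subst htail
          exact ⟨x, by rw [Set.Finite.mem_toFinset]; exact (List.isChain_cons_cons.mp hc).1, rfl⟩
      · rintro ⟨x, hx, rfl⟩
        rw [Set.Finite.mem_toFinset] at hx
        refine ⟨⟨List.isChain_cons_cons.mpr ⟨hx, hm.1⟩, ?_, ?_⟩, rfl⟩
        · rw [List.getLast?_cons_cons]; exact hm.2.1
        · have h := hm.2.2
          simp only [List.length_cons] at h ⊢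
          omega
    rw [h, Finset.card_image_of_injective _ (fun a b hab => by injection hab)]
    rw [← Set.ncard_eq_toFinset_card _ (Set.toFinite _)]
    simp [inDeg]
  -- the key recurrence: `2 * |Wf i| ≤ |Wf (i+1)| + 1` for `i ≤ k`
  have hrec : ∀ i, i ≤ k → 2 * (Wf i).card ≤ (Wf (i + 1)).card + 1 := by
    intro i hik
    have hsum : (Wf (i + 1)).card
        = ∑ m ∈ Wf i, ((Wf (i + 1)).filter fun l => l.tail = m).card :=
      Finset.card_eq_sum_card_fiberwise (fun l hl => tailMem i l hl)
    have hsum2 : (Wf (i + 1)).card = ∑ m ∈ Wf i, inDeg A m.headI := by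
      rw [hsum]
      exact Finset.sum_congr rfl (fun m hm => fiber i m hm)
    rw [hsum2]
    refine sum_ge_aux (Wf i) (fun m => inDeg A m.headI) ?_ ?_
    · intro m _
      show 1 ≤ inDeg A m.headI
      rcases hall m.headI with h | h | h <;> omega
    · rw [Finset.card_le_one]
      intro a ha b hb
      rw [Finset.mem_filter] at ha hb
      have hha : a.headI = v1 := by
        have h' : inDeg A a.headI = 1 := ha.2
        have : a.headI ∈ {v : V | inDeg A v = 1} := h'
        rwa [hv1] at this
      have hhb : b.headI = v1 := by
        have h' : inDeg A b.headI = 1 := hb.2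
        have : b.headI ∈ {v : V | inDeg A v = 1} := h'
        rwa [hv1] at this
      exact headInj i hik i hik a ha.1 b hb.1 (by rw [hha, hhb])
  -- growth: `|Wf i| ≥ 2^i + 1` for `1 ≤ i ≤ k`
  have pow : ∀ i, 1 ≤ i → i ≤ k → 2 ^ i + 1 ≤ (Wf i).card := by
    intro i
    induction i with
    | zero => omega
    | succ n ih =>
      intro _ hik
      rcases Nat.eq_zero_or_pos n with hn | hn
      · subst hn; rw [c1]; norm_num
      · have h1n : 2 ^ n + 1 ≤ (Wf n).card := ih hn (by omega)
        have h2 : 2 * (Wf n).card ≤ (Wf (n + 1)).card + 1 := hrec n (by omega)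
        have h3 : 2 ^ (n + 1) = 2 * 2 ^ n := by ring
        omega
  -- the walks of length at most `k` ending at `v'` inject into `V` via heads
  set U : Finset (List V) := (Finset.range (k + 1)).biUnion Wf with hUdef
  have cardU : U.card = ∑ i ∈ Finset.range (k + 1), (Wf i).card := by
    refine Finset.card_biUnion ?_
    intro i hi j hj hij
    rw [Function.onFun, Finset.disjoint_left]
    intro l hli hlj
    rw [memWf] at hli hlj
    exact hij (by omega)
  have hUle : U.card ≤ Fintype.card V := by
    rw [← Finset.card_univ]
    refine Finset.card_le_card_of_injOn (fun l => l.headI) (fun _ _ => Finset.mem_univ _) ?_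
    intro l₁ hl₁ l₂ hl₂ heq
    rw [Finset.coe_biUnion] at hl₁ hl₂
    simp only [Finset.coe_range, Set.mem_iUnion, Finset.mem_coe, Set.mem_Iio] at hl₁ hl₂
    obtain ⟨i, hi, hl₁⟩ := hl₁
    obtain ⟨j, hj, hl₂⟩ := hl₂
    exact headInj i (by omega) j (by omega) l₁ hl₁ l₂ hl₂ heq
  -- lower bound on the total number of such walks
  have sum_lb : moore 2 k + k ≤ ∑ i ∈ Finset.range (k + 1), (Wf i).card := by
    rw [Finset.sum_range_succ']
    have hle : ∑ i ∈ Finset.range k, (2 ^ (i + 1) + 1)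
        ≤ ∑ i ∈ Finset.range k, (Wf (i + 1)).card := by
      refine Finset.sum_le_sum ?_
      intro i hi
      rw [Finset.mem_range] at hi
      exact pow (i + 1) (by omega) (by omega)
    have hsplit : ∑ i ∈ Finset.range k, (2 ^ (i + 1) + 1)
        = (∑ i ∈ Finset.range k, 2 ^ (i + 1)) + k := by
      rw [Finset.sum_add_distrib, Finset.sum_const, Finset.card_range, smul_eq_mul, mul_one]
    rw [moore_two, c0]
    omega
  rw [cardU] at hUle
  rw [hcard] at hUle
  omega
end

section
/- Let G be a k-geodetic digraph (k ≥ 2) with out-degree 2, order M(2,k)+2, and in-degree sequence (1,1,1,2,...,2,3,3,3). Then every vertex of in-degree 3 has at least one in-neighbour of in-degree 1. -/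
/-! ### Auxiliary arithmetic lemmas -/

/-- `Efun c m` is the "deficit" `∑_{i<m} c i * 2^(m-1-i)`. -/
private def Efun (c : ℕ → ℕ) : ℕ → ℕ
  | 0 => 0
  | n + 1 => 2 * Efun c n + c n

private lemma Efun_succ (c : ℕ → ℕ) (n : ℕ) : Efun c (n + 1) = 2 * Efun c n + c n := rfl

private lemma lemP (a c : ℕ → ℕ) (k : ℕ) (ha1 : a 1 = 3)
    (hgrow : ∀ j, j + 1 ≤ k → 2 * a j ≤ a (j + 1) + c j) :
    ∀ m, m + 1 ≤ k → 3 * 2 ^ m ≤ a (m + 1) + Efun c (m + 1) := by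
  intro m
  induction m with
  | zero =>
    intro _
    have h0 : Efun c 0 = 0 := rfl
    have h1 := Efun_succ c 0
    have ha1' : a (0 + 1) = 3 := ha1
    omega
  | succ n ih =>
    intro h
    have h1 := ih (by omega)
    have hg := hgrow (n + 1) h
    have he := Efun_succ c (n + 1)
    have hpow : (2:ℕ) ^ (n + 1) = 2 * 2 ^ n := by ring
    omega

private lemma lemSum (a c : ℕ → ℕ) (k : ℕ) (ha0 : a 0 = 1) (ha1 : a 1 = 3)
    (hgrow : ∀ j, j + 1 ≤ k → 2 * a j ≤ a (j + 1) + c j) :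
    ∀ m, 1 ≤ m → m ≤ k →
      3 * 2 ^ m ≤ (∑ j ∈ Finset.range (m + 1), a j)
        + (∑ j ∈ Finset.range (m + 1), Efun c j) + 2 := by
  intro m
  induction m with
  | zero => omega
  | succ n ih =>
    intro _ hm
    rcases Nat.eq_zero_or_pos n with hn | hn
    · subst hn
      have h0 : Efun c 0 = 0 := rfl
      have he := Efun_succ c 0
      simp only [Finset.sum_range_succ, Finset.sum_range_one]
      omega
    · have h1 := ih hn (by omega)
      have h2 := lemP a c k ha1 hgrow n hm
      rw [Finset.sum_range_succ, Finset.sum_range_succ (f := fun j => Efun c j)]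
      have hpow : (2:ℕ) ^ (n + 1) = 2 * 2 ^ n := by ring
      omega

private lemma lemSE (c : ℕ → ℕ) :
    ∀ m, (∑ j ∈ Finset.range (m + 1), Efun c j) + (∑ j ∈ Finset.range (m + 1), c j)
      = Efun c (m + 1) := by
  intro m
  induction m with
  | zero => simp [Efun_succ]; rfl
  | succ n ih =>
    rw [Finset.sum_range_succ, Finset.sum_range_succ (f := c)]
    have h1 := Efun_succ c (n + 1)
    have h2 := Efun_succ c (n + 2)
    omega

private lemma lemW (c : ℕ → ℕ) (h0 : c 0 = 0) (h1 : c 1 = 0) :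
    ∀ m, 2 * Efun c (m + 2) ≤ 2 ^ m * ∑ j ∈ Finset.range (m + 2), c j := by
  intro m
  induction m with
  | zero =>
    have : Efun c 2 = 0 := by simp [Efun_succ, h0, h1]; rfl
    simp [this]
  | succ n ih =>
    have he := Efun_succ c (n + 2)
    rw [Finset.sum_range_succ]
    have hone : (1:ℕ) ≤ 2 ^ n := Nat.one_le_two_pow
    have hpow : (2:ℕ) ^ (n + 1) = 2 * 2 ^ n := by ring
    have hc : 2 * c (n + 2) ≤ 2 * 2 ^ n * c (n + 2) := by nlinarith
    nlinarith [ih]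

private lemma moore_two_s16 (n : ℕ) : moore 2 n + 1 = 2 ^ (n + 1) := by
  induction n with
  | zero => rfl
  | succ m ih =>
    have h1 : moore 2 (m + 1) = moore 2 m + 2 ^ (m + 1) := Finset.sum_range_succ _ _
    have h2 : (2:ℕ) ^ (m + 2) = 2 * 2 ^ (m + 1) := by ring
    omega

private lemma head_decomp {V : Type*} {l : List V} {u : V} (h : l.head? = some u) :
    ∃ t, l = u :: t := by
  cases l with
  | nil => simp at h
  | cons a t =>
    simp only [List.head?_cons, Option.some_inj] at h
    exact ⟨t, by rw [h]⟩

/-! ### Main theorem -/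

/-- Let `G` be a `k`-geodetic digraph (`k ≥ 2`) with out-degree 2, order
`M(2,k)+2`, and in-degree sequence `(1,1,1,2,…,2,3,3,3)`.  Then every vertex of
in-degree 3 has at least one in-neighbour of in-degree 1. -/
theorem stmt16 {V : Type*} [Fintype V] (A : V → V → Prop) (k : ℕ) (hk : 2 ≤ k)
    (hgeo : IsGeodetic A k) (hout : ∀ u : V, outDeg A u = 2)
    (hcard : Fintype.card V = moore 2 k + 2)
    (h1 : {v : V | inDeg A v = 1}.ncard = 3)
    (h3 : {v : V | inDeg A v = 3}.ncard = 3)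
    (hall : ∀ v : V, inDeg A v = 1 ∨ inDeg A v = 2 ∨ inDeg A v = 3) :
    ∀ v' : V, inDeg A v' = 3 → ∃ v : V, inDeg A v = 1 ∧ A v v' := by
  classical
  intro v' hv3
  by_contra hcon
  push_neg at hcon
  -- hcon : ∀ v, inDeg A v = 1 → ¬ A v v'
  -- `B j` : set of start vertices of walks of length exactly `j` ending at `v'`.
  set B : ℕ → Finset V := fun j => Finset.univ.filter
    (fun u => ∃ l : List V, l.Chain' A ∧ l.head? = some u ∧ l.getLast? = some v'
      ∧ l.length = j + 1) with hBdef
  have hmemB : ∀ j u, u ∈ B j ↔ ∃ l : List V, l.Chain' A ∧ l.head? = some u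
      ∧ l.getLast? = some v' ∧ l.length = j + 1 := by
    intro j u; simp [hBdef]
  -- uniqueness of short walks
  have huniq : ∀ (u : V) (l l' : List V), l.Chain' A → l.head? = some u →
      l.getLast? = some v' → l.length ≤ k + 1 → l'.Chain' A → l'.head? = some u →
      l'.getLast? = some v' → l'.length ≤ k + 1 → l = l' := by
    intro u l l' a1 a2 a3 a4 b1 b2 b3 b4
    exact hgeo u v' ⟨a1, a2, a3, a4⟩ ⟨b1, b2, b3, b4⟩
  -- in-neighbour finsets
  set N : V → Finset V := fun u => Finset.univ.filter (fun w => A w u) with hNdef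
  have hNcard : ∀ u, (N u).card = inDeg A u := by
    intro u
    have : {w | A w u} = ↑(N u) := by ext w; simp [hNdef]
    rw [inDeg, this, Set.ncard_coe_finset]
  -- B 0 = {v'}
  have hB0 : B 0 = {v'} := by
    ext u
    rw [hmemB, Finset.mem_singleton]
    constructor
    · rintro ⟨l, hc, hh, hg, hlen⟩
      obtain ⟨a, rfl⟩ := List.length_eq_one_iff.mp hlen
      simp only [List.head?_cons, List.getLast?_singleton, Option.some_inj] at hh hg
      rw [← hh]; exact hg
    · intro h
      exact ⟨[u], List.isChain_singleton u, rfl, by simp [h], rfl⟩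
  -- B 1 is the set of in-neighbours of v'
  have hB1 : B 1 = N v' := by
    ext u
    rw [hmemB]
    simp only [hNdef, Finset.mem_filter, Finset.mem_univ, true_and]
    constructor
    · rintro ⟨l, hc, hh, hg, hlen⟩
      obtain ⟨n1, n2, rfl⟩ := List.length_eq_two.mp hlen
      simp only [List.head?_cons, Option.some_inj] at hh
      rw [List.getLast?_cons_cons, List.getLast?_singleton, Option.some_inj] at hg
      subst hh; subst hg
      exact List.isChain_pair.mp hc
    · intro h
      exact ⟨[u, v'], List.isChain_pair.mpr h, rfl, rfl, rfl⟩
  -- disjointness of the levels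
  have hBdisj : ∀ j ∈ Finset.range (k + 1), ∀ j' ∈ Finset.range (k + 1), j ≠ j' →
      Disjoint (B j) (B j') := by
    intro j hj j' hj' hne
    rw [Finset.mem_range] at hj hj'
    rw [Finset.disjoint_left]
    intro u hu hu'
    rw [hmemB] at hu hu'
    obtain ⟨l, c1, c2, c3, c4⟩ := hu
    obtain ⟨l', d1, d2, d3, d4⟩ := hu'
    have heq := huniq u l l' c1 c2 c3 (by omega) d1 d2 d3 (by omega)
    subst heq
    omega
  -- counting bound
  have hsumB : ∑ j ∈ Finset.range (k + 1), (B j).card ≤ moore 2 k + 2 := by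
    rw [← Finset.card_biUnion hBdisj, ← hcard]
    exact Finset.card_le_univ _
  -- the growth inequality
  obtain ⟨C, hCdef⟩ : ∃ C : ℕ → Finset V, ∀ j, C j = (B j).filter (fun u => inDeg A u = 1) :=
    ⟨_, fun _ => rfl⟩
  have hgrowth : ∀ j, j + 1 ≤ k → 2 * (B j).card ≤ (B (j + 1)).card + (C j).card := by
    intro j hj
    have hsub : (B j).biUnion N ⊆ B (j + 1) := by
      intro w hw
      rw [Finset.mem_biUnion] at hw
      obtain ⟨u, hu, hwu⟩ := hw
      rw [hmemB] at hu
      obtain ⟨l, c1, c2, c3, c4⟩ := hu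
      obtain ⟨t, rfl⟩ := head_decomp c2
      have hA : A w u := by simpa [hNdef] using hwu
      rw [hmemB]
      refine ⟨w :: u :: t, List.isChain_cons_cons.mpr ⟨hA, c1⟩, rfl, ?_, ?_⟩
      · rw [List.getLast?_cons_cons]; exact c3
      · rw [List.length_cons, c4]
    have hdisjN : ∀ u1 ∈ B j, ∀ u2 ∈ B j, u1 ≠ u2 → Disjoint (N u1) (N u2) := by
      intro u1 hu1 u2 hu2 hne
      rw [Finset.disjoint_left]
      intro w hw1 hw2
      rw [hmemB] at hu1 hu2
      obtain ⟨l1, a1, a2, a3, a4⟩ := hu1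
      obtain ⟨l2, b1, b2, b3, b4⟩ := hu2
      obtain ⟨t1, rfl⟩ := head_decomp a2
      obtain ⟨t2, rfl⟩ := head_decomp b2
      have hA1 : A w u1 := by simpa [hNdef] using hw1
      have hA2 : A w u2 := by simpa [hNdef] using hw2
      have heq := huniq w (w :: u1 :: t1) (w :: u2 :: t2)
        (List.isChain_cons_cons.mpr ⟨hA1, a1⟩) rfl
        (by rw [List.getLast?_cons_cons]; exact a3)
        (by rw [List.length_cons, a4]; omega)
        (List.isChain_cons_cons.mpr ⟨hA2, b1⟩) rfl
        (by rw [List.getLast?_cons_cons]; exact b3)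
        (by rw [List.length_cons, b4]; omega)
      simp only [List.cons.injEq, true_and] at heq
      exact hne heq.1
    have hcount : ∑ u ∈ B j, (N u).card ≤ (B (j + 1)).card := by
      rw [← Finset.card_biUnion hdisjN]
      exact Finset.card_le_card hsub
    have hlow : ∀ u ∈ B j, 2 ≤ (N u).card + (if inDeg A u = 1 then 1 else 0) := by
      intro u _
      rw [hNcard]
      rcases hall u with h | h | h <;> simp [h]
    calc 2 * (B j).card = ∑ _u ∈ B j, 2 := by
          rw [Finset.sum_const, smul_eq_mul, mul_comm]
      _ ≤ ∑ u ∈ B j, ((N u).card + if inDeg A u = 1 then 1 else 0) :=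
          Finset.sum_le_sum hlow
      _ = (∑ u ∈ B j, (N u).card) + ∑ u ∈ B j, (if inDeg A u = 1 then 1 else 0) :=
          Finset.sum_add_distrib
      _ ≤ (B (j + 1)).card + (C j).card := by
          have hc : (C j).card = ∑ u ∈ B j, (if inDeg A u = 1 then 1 else 0) := by
            rw [hCdef j]; exact Finset.card_filter _ _
          rw [hc]
          exact Nat.add_le_add_right hcount _
  -- the total count of in-degree-1 starting vertices is at most 3
  have hCsum : ∑ j ∈ Finset.range (k + 1), (C j).card ≤ 3 := by
    have hCdisj : ∀ j ∈ Finset.range (k + 1), ∀ j' ∈ Finset.range (k + 1), j ≠ j' →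
        Disjoint (C j) (C j') := by
      intro j hj j' hj' hne
      rw [Finset.disjoint_left]
      intro u hu hu'
      rw [hCdef j, Finset.mem_filter] at hu
      rw [hCdef j', Finset.mem_filter] at hu'
      exact (Finset.disjoint_left.mp (hBdisj j hj j' hj' hne)) hu.1 hu'.1
    rw [← Finset.card_biUnion hCdisj]
    have hsub : (Finset.range (k + 1)).biUnion C ⊆
        Finset.univ.filter (fun u => inDeg A u = 1) := by
      intro u hu
      rw [Finset.mem_biUnion] at hu
      obtain ⟨j, _, hj⟩ := hu
      rw [hCdef j] at hj
      simp only [Finset.mem_filter] at hj ⊢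
      exact ⟨Finset.mem_univ u, hj.2⟩
    have hcard1 : (Finset.univ.filter (fun u : V => inDeg A u = 1)).card = 3 := by
      have he : {v : V | inDeg A v = 1} = ↑(Finset.univ.filter (fun u : V => inDeg A u = 1)) := by
        ext w; simp
      rw [he, Set.ncard_coe_finset] at h1
      exact h1
    calc ((Finset.range (k + 1)).biUnion C).card
        ≤ (Finset.univ.filter (fun u : V => inDeg A u = 1)).card :=
          Finset.card_le_card hsub
      _ = 3 := hcard1
  -- C 0 and C 1 are empty
  have hC0 : (C 0).card = 0 := by
    rw [Finset.card_eq_zero, hCdef 0, hB0]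
    ext u
    simp only [Finset.mem_filter, Finset.mem_singleton, Finset.notMem_empty, iff_false,
      not_and]
    rintro rfl h
    omega
  have hC1 : (C 1).card = 0 := by
    rw [Finset.card_eq_zero, hCdef 1, hB1]
    ext u
    simp only [Finset.mem_filter, hNdef, Finset.mem_univ, true_and,
      Finset.notMem_empty, iff_false, not_and]
    intro hA h1u
    exact absurd hA (hcon u h1u)
  -- assemble the numeric data
  have ha0 : (B 0).card = 1 := by rw [hB0]; exact Finset.card_singleton v'
  have ha1 : (B 1).card = 3 := by rw [hB1, hNcard, hv3]
  obtain ⟨m0, rfl⟩ : ∃ m0, k = m0 + 2 := ⟨k - 2, by omega⟩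
  have hS := lemSum (fun j => (B j).card) (fun j => (C j).card) (m0 + 2) ha0 ha1 hgrowth
    (m0 + 2) (by omega) le_rfl
  have hSE := lemSE (fun j => (C j).card) (m0 + 2)
  have hW := lemW (fun j => (C j).card) hC0 hC1 (m0 + 1)
  beta_reduce at hS hSE hW
  have e1 : m0 + 2 + 1 = m0 + 3 := by omega
  have e2 : m0 + 1 + 2 = m0 + 3 := by omega
  rw [e1] at hS hSE
  rw [e2] at hW
  rw [e1] at hsumB hCsum
  have hM := moore_two_s16 (m0 + 2)
  rw [e1] at hM
  have hone : (1:ℕ) ≤ 2 ^ m0 := Nat.one_le_two_pow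
  have hkey : 2 ^ (m0 + 1) * (∑ j ∈ Finset.range (m0 + 3), (C j).card) + 6 ≤
      6 * 2 ^ m0 + 2 * (∑ j ∈ Finset.range (m0 + 3), (C j).card) := by
    have h2 : (2:ℕ) ^ (m0 + 1) = 2 * 2 ^ m0 := by ring
    nlinarith [hCsum]
  have hE6 : 2 * Efun (fun j => (C j).card) (m0 + 3) + 6 ≤
      6 * 2 ^ m0 + 2 * (∑ j ∈ Finset.range (m0 + 3), (C j).card) :=
    le_trans (Nat.add_le_add_right hW 6) hkey
  have hp2 : (2:ℕ) ^ (m0 + 2) = 4 * 2 ^ m0 := by ring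
  have hp3 : (2:ℕ) ^ (m0 + 3) = 8 * 2 ^ m0 := by ring
  omega
end
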